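/- Let Y > 0, let V : ℝ → ℂ be continuous and 1-periodic, let W : S_Y → ℂ be continuous, and let ε > 0 and E ∈ ℂ. Let f, g : ℝ × S_Y → ℂ be such that for every φ ∈ S_Y the maps x ↦ f(x,φ) and x ↦ g(x,φ) are twice continuously differentiable and satisfy −u''(x) + (V(x) + W(εx + φ))u(x) = E u(x) for all x ∈ ℝ, and such that both f and g are consistent: f(x+1,φ) = f(x,φ+ε) and g(x+1,φ) = g(x,φ+ε) for all x ∈ ℝ, φ ∈ S_Y. Then the Wronskian w(φ) := ∂ₓf(0,φ)·g(0,φ) − f(0,φ)·∂ₓg(0,φ) satisfies w(φ + ε) = w(φ) for every φ ∈ S_Y. -/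
import Mathlib

/-- The Wronskian of two solutions of the same second-order ODE is constant. -/
lemma wronskian_const (F G : ℝ → ℂ) (q : ℝ → ℂ)
    (hF : ContDiff ℝ 2 F) (hG : ContDiff ℝ 2 G)
    (hFeq : ∀ x, deriv (deriv F) x = q x * F x)
    (hGeq : ∀ x, deriv (deriv G) x = q x * G x) (a b : ℝ) :
    deriv F a * G a - F a * deriv G a = deriv F b * G b - F b * deriv G b := by
  have hF1 : Differentiable ℝ F := hF.differentiable (by norm_num)
  have hG1 : Differentiable ℝ G := hG.differentiable (by norm_num)
  have hF' : Differentiable ℝ (deriv F) :=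
    (hF.iterate_deriv' 1 1).differentiable (by norm_num)
  have hG' : Differentiable ℝ (deriv G) :=
    (hG.iterate_deriv' 1 1).differentiable (by norm_num)
  have key : ∀ x : ℝ, HasDerivAt (fun x => deriv F x * G x - F x * deriv G x) 0 x := by
    intro x
    have h1 : HasDerivAt (fun x => deriv F x * G x)
        (deriv (deriv F) x * G x + deriv F x * deriv G x) x :=
      ((hF' x).hasDerivAt).mul ((hG1 x).hasDerivAt)
    have h2 : HasDerivAt (fun x => F x * deriv G x)
        (deriv F x * deriv G x + F x * deriv (deriv G) x) x :=
      ((hF1 x).hasDerivAt).mul ((hG' x).hasDerivAt)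
    have := h1.sub h2
    have heq : deriv (deriv F) x * G x + deriv F x * deriv G x -
        (deriv F x * deriv G x + F x * deriv (deriv G) x) = 0 := by
      rw [hFeq, hGeq]; ring
    rwa [heq] at this
  have := is_const_of_deriv_eq_zero (f := fun x => deriv F x * G x - F x * deriv G x)
    (fun x => ((key x).differentiableAt)) (fun x => (key x).deriv) a b
  exact this

/-- Periodicity principle of the paper: the Wronskian (at `x = 0`) of two consistent
solutions of the perturbed periodic equation on the strip `S_Y` is `ε`-periodic in the
parameter `φ`. -/
theorem stmt_5 (Y : ℝ) (hY : 0 < Y)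
    (V : ℝ → ℂ) (hV : Continuous V) (hVper : ∀ x : ℝ, V (x + 1) = V x)
    (W : ℂ → ℂ) (hW : ContinuousOn W {z : ℂ | |z.im| ≤ Y})
    (ε : ℝ) (hε : 0 < ε) (E : ℂ)
    (f g : ℝ → ℂ → ℂ)
    (hf2 : ∀ φ : ℂ, |φ.im| ≤ Y → ContDiff ℝ 2 (fun x : ℝ => f x φ))
    (hg2 : ∀ φ : ℂ, |φ.im| ≤ Y → ContDiff ℝ 2 (fun x : ℝ => g x φ))
    (hfeq : ∀ φ : ℂ, |φ.im| ≤ Y → ∀ x : ℝ,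
      -(deriv (deriv (fun y : ℝ => f y φ)) x) + (V x + W ((ε * x : ℝ) + φ)) * f x φ
        = E * f x φ)
    (hgeq : ∀ φ : ℂ, |φ.im| ≤ Y → ∀ x : ℝ,
      -(deriv (deriv (fun y : ℝ => g y φ)) x) + (V x + W ((ε * x : ℝ) + φ)) * g x φ
        = E * g x φ)
    (hfcons : ∀ x : ℝ, ∀ φ : ℂ, |φ.im| ≤ Y → f (x + 1) φ = f x (φ + ε))
    (hgcons : ∀ x : ℝ, ∀ φ : ℂ, |φ.im| ≤ Y → g (x + 1) φ = g x (φ + ε)) :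
    ∀ φ : ℂ, |φ.im| ≤ Y →
      deriv (fun x : ℝ => f x (φ + ε)) 0 * g 0 (φ + ε)
          - f 0 (φ + ε) * deriv (fun x : ℝ => g x (φ + ε)) 0
        = deriv (fun x : ℝ => f x φ) 0 * g 0 φ
          - f 0 φ * deriv (fun x : ℝ => g x φ) 0 := by
  intro φ hφ
  -- rewrite functions of φ+ε as shifted functions of φ
  have hfun : (fun x : ℝ => f x (φ + ε)) = fun x : ℝ => f (x + 1) φ := by
    funext x; exact (hfcons x φ hφ).symm
  have hgun : (fun x : ℝ => g x (φ + ε)) = fun x : ℝ => g (x + 1) φ := by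
    funext x; exact (hgcons x φ hφ).symm
  have hdf : deriv (fun x : ℝ => f x (φ + ε)) 0 = deriv (fun x : ℝ => f x φ) 1 := by
    rw [hfun, deriv_comp_add_const (fun x : ℝ => f x φ) 1 0]; norm_num
  have hdg : deriv (fun x : ℝ => g x (φ + ε)) 0 = deriv (fun x : ℝ => g x φ) 1 := by
    rw [hgun, deriv_comp_add_const (fun x : ℝ => g x φ) 1 0]; norm_num
  have hf0 : f 0 (φ + ε) = f 1 φ := by
    rw [← hfcons 0 φ hφ]; norm_num
  have hg0 : g 0 (φ + ε) = g 1 φ := by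
    rw [← hgcons 0 φ hφ]; norm_num
  rw [hdf, hdg, hf0, hg0]
  exact wronskian_const (fun x => f x φ) (fun x => g x φ)
    (fun x => V x + W ((ε * x : ℝ) + φ) - E)
    (hf2 φ hφ) (hg2 φ hφ)
    (fun x => by have := hfeq φ hφ x; ring_nf; ring_nf at this; linear_combination -this)
    (fun x => by have := hgeq φ hφ x; ring_nf; ring_nf at this; linear_combination -this)
    1 0
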